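/- For any unitary U on a Hilbert space of dimension 2^{g+t}, and any s ≤ t, we have Tr[(|0⟩⟨0|^{⊗(g+s)} ⊗ I_{t-s}) · U(|0⟩⟨0|^{⊗g} ⊗ π_t)U†] ≤ 2^{-s}, where π_t = I_t/2^t is the maximally mixed state on t qubits. -/
import Mathlib


open Matrix

lemma count_clean (n k : ℕ) :
    (Finset.univ.filter fun x : Fin n → Fin 2 => ∀ i : Fin n, (i:ℕ) < k → x i = 0).card
      = 2 ^ ((Finset.univ.filter fun i : Fin n => ¬ (i:ℕ) < k).card) := by
  classical
  have hset : (Finset.univ.filter fun x : Fin n → Fin 2 => ∀ i : Fin n, (i:ℕ) < k → x i = 0)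
      = Fintype.piFinset (fun i : Fin n => if (i:ℕ) < k then {0} else Finset.univ) := by
    ext x
    simp only [Finset.mem_filter, Finset.mem_univ, true_and, Fintype.mem_piFinset]
    constructor
    · intro h i
      by_cases hi : (i:ℕ) < k
      · simp [hi, h i hi]
      · simp [hi]
    · intro h i hi
      have := h i
      simpa [hi] using this
  rw [hset, Fintype.card_piFinset]
  have : ∀ i : Fin n, ((if (i:ℕ) < k then ({0} : Finset (Fin 2)) else Finset.univ)).card
      = if (i:ℕ) < k then 1 else 2 := by
    intro i; split <;> simp
  simp only [this]
  rw [Finset.prod_ite]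
  simp only [Finset.prod_const, one_pow, one_mul]

lemma count_rest (n k : ℕ) :
    (Finset.univ.filter fun i : Fin n => ¬ (i:ℕ) < k).card = n - k := by
  rw [Finset.card_filter, Fin.sum_univ_eq_sum_range (fun i => if ¬ i < k then 1 else 0),
    ← Finset.card_filter]
  have : (Finset.range n).filter (fun i => ¬ i < k) = Finset.Ico k n := by
    ext i; simp [Finset.mem_Ico, not_lt, and_comm]
  rw [this, Nat.card_Ico]


/-- Soundness of proofs-of-thermodynamical-work: a unitary acting on g clean qubits
and t maximally mixed qubits produces g+s clean qubits with probability at most 2^{-s}. -/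
theorem proof_of_work_soundness (g t s : ℕ) (hs : s ≤ t)
    (U : Matrix (Fin (g + t) → Fin 2) (Fin (g + t) → Fin 2) ℂ)
    (hU : U ∈ Matrix.unitaryGroup (Fin (g + t) → Fin 2) ℂ) :
    (Matrix.trace
      (Matrix.diagonal (fun x : Fin (g + t) → Fin 2 =>
          if ∀ i : Fin (g + t), (i : ℕ) < g + s → x i = 0 then (1 : ℂ) else 0) *
        (U *
          Matrix.diagonal (fun x : Fin (g + t) → Fin 2 =>
            if ∀ i : Fin (g + t), (i : ℕ) < g → x i = 0 then ((1 : ℂ) / 2 ^ t) else 0) *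
          Uᴴ))).re ≤ (1 : ℝ) / 2 ^ s := by

  classical
  set p : (Fin (g + t) → Fin 2) → ℂ := fun x =>
    if ∀ i : Fin (g + t), (i : ℕ) < g + s → x i = 0 then (1 : ℂ) else 0 with hp
  set q : (Fin (g + t) → Fin 2) → ℂ := fun x =>
    if ∀ i : Fin (g + t), (i : ℕ) < g → x i = 0 then ((1 : ℂ) / 2 ^ t) else 0 with hq
  set P : (Fin (g + t) → Fin 2) → ℝ := fun x =>
    if ∀ i : Fin (g + t), (i : ℕ) < g + s → x i = 0 then (1 : ℝ) else 0 with hP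
  set Q : (Fin (g + t) → Fin 2) → ℝ := fun x =>
    if ∀ i : Fin (g + t), (i : ℕ) < g → x i = 0 then ((1 : ℝ) / 2 ^ t) else 0 with hQ
  have hpc : ∀ x, p x = ((P x : ℝ) : ℂ) := by
    intro x; simp [hp, hP, apply_ite ((↑·) : ℝ → ℂ)]
  have hqc : ∀ x, q x = ((Q x : ℝ) : ℂ) := by
    intro x; simp [hq, hQ, apply_ite ((↑·) : ℝ → ℂ)]
  have key : (Matrix.diagonal p * (U * Matrix.diagonal q * Uᴴ)).trace
      = ∑ x, ∑ y, p x * (U x y * q y * star (U x y)) := by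
    unfold Matrix.trace
    refine Finset.sum_congr rfl fun x _ => ?_
    rw [Matrix.diag_apply, Matrix.diagonal_mul, Matrix.mul_apply, Finset.mul_sum]
    refine Finset.sum_congr rfl fun y _ => ?_
    rw [Matrix.mul_diagonal, Matrix.conjTranspose_apply]
  rw [key]
  have hterm : ∀ x y, (p x * (U x y * q y * star (U x y)))
      = ((P x * (Q y * Complex.normSq (U x y)) : ℝ) : ℂ) := by
    intro x y
    rw [hpc, hqc, show U x y * ((Q y : ℝ) : ℂ) * star (U x y)
        = ((Q y : ℝ) : ℂ) * (U x y * star (U x y)) by ring,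
      show star (U x y) = (starRingEnd ℂ) (U x y) from rfl, Complex.mul_conj]
    push_cast
    ring
  simp only [hterm]
  simp only [← Complex.ofReal_sum, Complex.ofReal_re]
  -- row norms of the unitary
  have hrow : ∀ x, ∑ y, Complex.normSq (U x y) = 1 := by
    intro x
    have h2 : (U * Uᴴ) x x = 1 := by
      rw [show U * Uᴴ = 1 by simpa [Matrix.star_eq_conjTranspose] using hU.2]
      simp [Matrix.one_apply]
    have h3 : (∑ y, (Complex.normSq (U x y) : ℂ)) = 1 := by
      rw [← h2, Matrix.mul_apply]
      refine Finset.sum_congr rfl fun y _ => ?_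
      rw [Matrix.conjTranspose_apply,
        show star (U x y) = (starRingEnd ℂ) (U x y) from rfl, Complex.mul_conj]
    have := congrArg Complex.re h3
    simpa [← Complex.ofReal_sum] using this
  have hQle : ∀ y, Q y ≤ 1 / 2 ^ t := by
    intro y
    rw [hQ]
    dsimp only
    split
    · exact le_rfl
    · positivity
  have hinner : ∀ x, ∑ y, Q y * Complex.normSq (U x y) ≤ 1 / 2 ^ t := by
    intro x
    calc ∑ y, Q y * Complex.normSq (U x y)
        ≤ ∑ y, (1 / 2 ^ t) * Complex.normSq (U x y) :=
          Finset.sum_le_sum fun y _ =>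
            mul_le_mul_of_nonneg_right (hQle y) (Complex.normSq_nonneg _)
      _ = 1 / 2 ^ t := by rw [← Finset.mul_sum, hrow x, mul_one]
  have hPnonneg : ∀ x, 0 ≤ P x := by
    intro x; rw [hP]; dsimp only; split <;> norm_num
  have hsum : ∑ x, P x = (2 : ℝ) ^ (t - s) := by
    rw [hP]
    rw [Finset.sum_boole, count_clean (g + t) (g + s), count_rest (g + t) (g + s),
      Nat.add_sub_add_left]
    push_cast
    ring
  calc ∑ x, ∑ y, P x * (Q y * Complex.normSq (U x y))
      = ∑ x, P x * ∑ y, Q y * Complex.normSq (U x y) := by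
        simp [Finset.mul_sum]
    _ ≤ ∑ x, P x * (1 / 2 ^ t) :=
        Finset.sum_le_sum fun x _ =>
          mul_le_mul_of_nonneg_left (hinner x) (hPnonneg x)
    _ = (2 : ℝ) ^ (t - s) * (1 / 2 ^ t) := by rw [← Finset.sum_mul, hsum]
    _ = 1 / 2 ^ s := by
        have h2 : (2 : ℝ) ^ t = 2 ^ (t - s) * 2 ^ s := by
          rw [← pow_add, Nat.sub_add_cancel hs]
        rw [h2]
        field_simp
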